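/- arXiv:1405.6288 — 2 statements merged into one kernel-verified Lean document; each statement's English description precedes it below -/
import Mathlib

section
/- For every integer m ≥ 1, the m-th term of the upper central series of the group U_3 of unitriangular automorphisms of A_3 = K⟨x_1,x_2,x_3⟩ is Z_m(U_3) = { (x_1 + f_1(x_2,x_3), x_2, x_3) : f_1 ∈ S_m }, i.e. it consists exactly of the automorphisms fixing x_2 and x_3 and sending x_1 ↦ x_1 + f_1 with f_1 ∈ S_m. -/
/- STATEMENT 15: for every integer m ≥ 1, the m-th term of the upper central series of
   the group U₃ of unitriangular automorphisms of A₃ = K⟨x₁,x₂,x₃⟩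
   (x₁ = ι K 0, x₂ = ι K 1, x₃ = ι K 2) is
   Z_m(U₃) = { (x₁ + f₁(x₂,x₃), x₂, x₃) : f₁ ∈ S_m },
   where S₁ = S is the algebra of invariants of the U₂-action on K⟨x₂,x₃⟩ and
   S_{m+1} = { f ∈ K⟨x₂,x₃⟩ : f^φ − f ∈ S_m for every φ in the U₂-action }.
   (Below `SS K m` is the paper's S_m : `SS K 0 = {0}` so that `SS K 1 = S`.) -/

noncomputable section
open FreeAlgebra

abbrev A3 (K : Type) [Field K] := FreeAlgebra K (Fin 3)

private lemma adjoin_x3_stable {K : Type} [Field K]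
    (φ : A3 K ≃ₐ[K] A3 K) (d : K)
    (h3 : φ (ι K 2) = ι K 2 + algebraMap K (A3 K) d) :
    ∀ u ∈ Algebra.adjoin K ({ι K 2} : Set (A3 K)),
      φ u ∈ Algebra.adjoin K ({ι K 2} : Set (A3 K)) := by
  intro u hu
  induction hu using Algebra.adjoin_induction with
  | mem v hv =>
      rcases hv with rfl
      rw [h3]
      exact add_mem (Algebra.self_mem_adjoin_singleton K _) (Subalgebra.algebraMap_mem _ _)
  | algebraMap r => rw [AlgEquiv.commutes]; exact Subalgebra.algebraMap_mem _ _
  | add u v _ _ hu hv => rw [map_add]; exact add_mem hu hv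
  | mul u v _ _ hu hv => rw [map_mul]; exact mul_mem hu hv

private lemma adjoin_x2x3_stable {K : Type} [Field K]
    (φ : A3 K ≃ₐ[K] A3 K) (f2 : A3 K) (d : K)
    (hf2 : f2 ∈ Algebra.adjoin K ({ι K 2} : Set (A3 K)))
    (h2 : φ (ι K 1) = ι K 1 + f2)
    (h3 : φ (ι K 2) = ι K 2 + algebraMap K (A3 K) d) :
    ∀ u ∈ Algebra.adjoin K ({ι K 1, ι K 2} : Set (A3 K)),
      φ u ∈ Algebra.adjoin K ({ι K 1, ι K 2} : Set (A3 K)) := by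
  intro u hu
  have hsub : Algebra.adjoin K ({ι K 2} : Set (A3 K)) ≤
      Algebra.adjoin K ({ι K 1, ι K 2} : Set (A3 K)) :=
    Algebra.adjoin_mono (Set.singleton_subset_iff.mpr (Set.mem_insert_of_mem _ rfl))
  induction hu using Algebra.adjoin_induction with
  | mem v hv =>
      simp only [Set.mem_insert_iff, Set.mem_singleton_iff] at hv
      rcases hv with rfl | rfl
      · rw [h2]
        exact add_mem (Algebra.subset_adjoin (Set.mem_insert _ _)) (hsub hf2)
      · rw [h3]
        exact add_mem (Algebra.subset_adjoin (Set.mem_insert_of_mem _ rfl))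
          (Subalgebra.algebraMap_mem _ _)
  | algebraMap r => rw [AlgEquiv.commutes]; exact Subalgebra.algebraMap_mem _ _
  | add u v _ _ hu hv => rw [map_add]; exact add_mem hu hv
  | mul u v _ _ hu hv => rw [map_mul]; exact mul_mem hu hv

/-- The group `U₃` of unitriangular automorphisms of A₃ = K⟨x₁,x₂,x₃⟩:
x₁ ↦ x₁ + f₁(x₂,x₃), x₂ ↦ x₂ + f₂(x₃), x₃ ↦ x₃ + f₃·1. -/
def U3 (K : Type) [Field K] : Subgroup (A3 K ≃ₐ[K] A3 K) where
  carrier := {φ | ∃ f1 ∈ Algebra.adjoin K ({ι K 1, ι K 2} : Set (A3 K)),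
    ∃ f2 ∈ Algebra.adjoin K ({ι K 2} : Set (A3 K)), ∃ f3 : K,
    φ (ι K 0) = ι K 0 + f1 ∧ φ (ι K 1) = ι K 1 + f2 ∧
    φ (ι K 2) = ι K 2 + algebraMap K (A3 K) f3}
  one_mem' := ⟨0, Subalgebra.zero_mem _, 0, Subalgebra.zero_mem _, 0, by simp, by simp, by simp⟩
  mul_mem' := by
    rintro φ ψ ⟨f1, hf1, f2, hf2, f3, hφ1, hφ2, hφ3⟩ ⟨g1, hg1, g2, hg2, g3, hψ1, hψ2, hψ3⟩
    refine ⟨f1 + φ g1, add_mem hf1 (adjoin_x2x3_stable φ f2 f3 hf2 hφ2 hφ3 g1 hg1),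
      f2 + φ g2, add_mem hf2 (adjoin_x3_stable φ f3 hφ3 g2 hg2), f3 + g3, ?_, ?_, ?_⟩
    · show φ (ψ (ι K 0)) = _
      rw [hψ1, map_add, hφ1, add_assoc]
    · show φ (ψ (ι K 1)) = _
      rw [hψ2, map_add, hφ2, add_assoc]
    · show φ (ψ (ι K 2)) = _
      rw [hψ3, map_add, hφ3, AlgEquiv.commutes, map_add, add_assoc]
  inv_mem' := by
    rintro φ ⟨f1, hf1, f2, hf2, f3, hφ1, hφ2, hφ3⟩
    have hs3 : φ.symm (ι K 2) = ι K 2 + algebraMap K (A3 K) (-f3) := by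
      have h1 := congrArg φ.symm hφ3
      rw [AlgEquiv.symm_apply_apply, map_add, AlgEquiv.commutes] at h1
      rw [eq_sub_of_add_eq h1.symm, map_neg, sub_eq_add_neg]
    have hs2 : φ.symm (ι K 1) = ι K 1 + (-(φ.symm f2)) := by
      have h1 := congrArg φ.symm hφ2
      rw [AlgEquiv.symm_apply_apply, map_add] at h1
      rw [eq_sub_of_add_eq h1.symm, sub_eq_add_neg]
    have hs1 : φ.symm (ι K 0) = ι K 0 + (-(φ.symm f1)) := by
      have h1 := congrArg φ.symm hφ1
      rw [AlgEquiv.symm_apply_apply, map_add] at h1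
      rw [eq_sub_of_add_eq h1.symm, sub_eq_add_neg]
    have hm2 : φ.symm f2 ∈ Algebra.adjoin K ({ι K 2} : Set (A3 K)) :=
      adjoin_x3_stable φ.symm (-f3) hs3 f2 hf2
    exact ⟨-(φ.symm f1),
      neg_mem (adjoin_x2x3_stable φ.symm (-(φ.symm f2)) (-f3) (neg_mem hm2) hs2 hs3 f1 hf1),
      -(φ.symm f2), neg_mem hm2, -f3, hs1, hs2, hs3⟩

/-- `SS K m` is the paper's `S_m` for `m ≥ 1` (with the convention `SS K 0 = {0}`, so
that `SS K 1` is the invariant algebra `S`):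
`S_{m+1} = { f ∈ K⟨x₂,x₃⟩ : f^φ − f ∈ S_m for all φ in the U₂-action on K⟨x₂,x₃⟩ }`,
the U₂-action being the substitutions x₂ ↦ x₂ + g(x₃), x₃ ↦ x₃ + h·1. -/
def SS (K : Type) [Field K] : ℕ → Set (A3 K)
  | 0 => {0}
  | m + 1 => {f | f ∈ Algebra.adjoin K ({ι K 1, ι K 2} : Set (A3 K)) ∧
      ∀ g ∈ Algebra.adjoin K ({ι K 2} : Set (A3 K)), ∀ h : K,
        (FreeAlgebra.lift K ![ι K 0, ι K 1 + g, ι K 2 + algebraMap K (A3 K) h]) f - f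
          ∈ SS K m}

open Polynomial

namespace Aux
variable {K : Type} [Field K]

abbrev Ad2 (K : Type) [Field K] : Subalgebra K (A3 K) :=
  Algebra.adjoin K ({ι K 1, ι K 2} : Set (A3 K))
abbrev Ad3 (K : Type) [Field K] : Subalgebra K (A3 K) :=
  Algebra.adjoin K ({ι K 2} : Set (A3 K))

lemma Ad3_le_Ad2 : Ad3 K ≤ Ad2 K :=
  Algebra.adjoin_mono (Set.singleton_subset_iff.mpr (Set.mem_insert_of_mem _ rfl))

def subst (K : Type) [Field K] (g : A3 K) (h : K) : A3 K →ₐ[K] A3 K :=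
  FreeAlgebra.lift K ![ι K 0, ι K 1 + g, ι K 2 + algebraMap K (A3 K) h]

@[simp] lemma subst_x1 (g : A3 K) (h : K) : subst K g h (ι K 0) = ι K 0 := by
  simp [subst]

@[simp] lemma subst_x2 (g : A3 K) (h : K) : subst K g h (ι K 1) = ι K 1 + g := by
  simp [subst]

@[simp] lemma subst_x3 (g : A3 K) (h : K) :
    subst K g h (ι K 2) = ι K 2 + algebraMap K (A3 K) h := by
  simp [subst]

lemma eq_on_adjoin2 {B : Type} [Semiring B] [Algebra K B] (F G : A3 K →ₐ[K] B)
    (h1 : F (ι K 1) = G (ι K 1)) (h2 : F (ι K 2) = G (ι K 2)) :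
    ∀ u ∈ Ad2 K, F u = G u := by
  intro u hu
  induction hu using Algebra.adjoin_induction with
  | mem v hv =>
      simp only [Set.mem_insert_iff, Set.mem_singleton_iff] at hv
      rcases hv with rfl | rfl
      · exact h1
      · exact h2
  | algebraMap r => rw [AlgHom.commutes, AlgHom.commutes]
  | add u v _ _ hu hv => rw [map_add, map_add, hu, hv]
  | mul u v _ _ hu hv => rw [map_mul, map_mul, hu, hv]

lemma eq_on_adjoin3 {B : Type} [Semiring B] [Algebra K B] (F G : A3 K →ₐ[K] B)
    (h2 : F (ι K 2) = G (ι K 2)) :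
    ∀ u ∈ Ad3 K, F u = G u := by
  intro u hu
  induction hu using Algebra.adjoin_induction with
  | mem v hv => rcases hv with rfl; exact h2
  | algebraMap r => rw [AlgHom.commutes, AlgHom.commutes]
  | add u v _ _ hu hv => rw [map_add, map_add, hu, hv]
  | mul u v _ _ hu hv => rw [map_mul, map_mul, hu, hv]

lemma equiv_fix_adjoin2 (φ : A3 K ≃ₐ[K] A3 K) (h1 : φ (ι K 1) = ι K 1)
    (h2 : φ (ι K 2) = ι K 2) : ∀ u ∈ Ad2 K, φ u = u :=
  eq_on_adjoin2 φ.toAlgHom (AlgHom.id K _) h1 h2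

lemma equiv_fix_adjoin3 (φ : A3 K ≃ₐ[K] A3 K) (h2 : φ (ι K 2) = ι K 2) :
    ∀ u ∈ Ad3 K, φ u = u :=
  eq_on_adjoin3 φ.toAlgHom (AlgHom.id K _) h2

lemma equiv_eq_subst (φ : A3 K ≃ₐ[K] A3 K) (g : A3 K) (h : K)
    (h1 : φ (ι K 1) = ι K 1 + g) (h2 : φ (ι K 2) = ι K 2 + algebraMap K (A3 K) h) :
    ∀ u ∈ Ad2 K, φ u = subst K g h u :=
  eq_on_adjoin2 φ.toAlgHom (subst K g h) (by simpa using h1) (by simpa using h2)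

lemma algHom_maps_adjoin2 (F : A3 K →ₐ[K] A3 K) (h1 : F (ι K 1) ∈ Ad2 K)
    (h2 : F (ι K 2) ∈ Ad2 K) : ∀ u ∈ Ad2 K, F u ∈ Ad2 K := by
  intro u hu
  induction hu using Algebra.adjoin_induction with
  | mem v hv =>
      simp only [Set.mem_insert_iff, Set.mem_singleton_iff] at hv
      rcases hv with rfl | rfl
      exacts [h1, h2]
  | algebraMap r => rw [AlgHom.commutes]; exact Subalgebra.algebraMap_mem _ _
  | add u v _ _ hu hv => rw [map_add]; exact add_mem hu hv
  | mul u v _ _ hu hv => rw [map_mul]; exact mul_mem hu hv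

lemma algHom_maps_adjoin3 (F : A3 K →ₐ[K] A3 K) (h2 : F (ι K 2) ∈ Ad3 K) :
    ∀ u ∈ Ad3 K, F u ∈ Ad3 K := by
  intro u hu
  induction hu using Algebra.adjoin_induction with
  | mem v hv => rcases hv with rfl; exact h2
  | algebraMap r => rw [AlgHom.commutes]; exact Subalgebra.algebraMap_mem _ _
  | add u v _ _ hu hv => rw [map_add]; exact add_mem hu hv
  | mul u v _ _ hu hv => rw [map_mul]; exact mul_mem hu hv

def e3 (K : Type) [Field K] : Polynomial K →ₐ[K] A3 K := Polynomial.aeval (ι K 2)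

def p3 (K : Type) [Field K] : A3 K →ₐ[K] Polynomial K :=
  FreeAlgebra.lift K ![0, 0, X]

@[simp] lemma p3_x3 : p3 K (ι K 2) = X := by simp [p3]
@[simp] lemma p3_x2 : p3 K (ι K 1) = 0 := by simp [p3]
@[simp] lemma e3_X : e3 K X = ι K 2 := by simp [e3]

lemma p3_e3 (q : Polynomial K) : p3 K (e3 K q) = q := by
  have h : (p3 K).comp (e3 K) = AlgHom.id K (Polynomial K) :=
    Polynomial.algHom_ext (by simp)
  have := congrArg (fun F : Polynomial K →ₐ[K] Polynomial K => F q) h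
  simpa using this

lemma e3_mem (q : Polynomial K) : e3 K q ∈ Ad3 K := by
  show e3 K q ∈ Algebra.adjoin K ({ι K 2} : Set (A3 K))
  rw [Algebra.adjoin_singleton_eq_range_aeval]
  exact ⟨q, rfl⟩

lemma mem_Ad3 {u : A3 K} (hu : u ∈ Ad3 K) : ∃ q, e3 K q = u := by
  have hu' : u ∈ Algebra.adjoin K ({ι K 2} : Set (A3 K)) := hu
  rw [Algebra.adjoin_singleton_eq_range_aeval] at hu'
  exact hu'

lemma e3_p3 {u : A3 K} (hu : u ∈ Ad3 K) : e3 K (p3 K u) = u := by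
  obtain ⟨q, rfl⟩ := mem_Ad3 hu
  rw [p3_e3]

lemma subst_e3 (g : A3 K) (h : K) (r : Polynomial K) :
    subst K g h (e3 K r) = e3 K (r.comp (X + C h)) := by
  have h1 : (subst K g h).comp (e3 K) =
      Polynomial.aeval (ι K 2 + algebraMap K (A3 K) h) :=
    Polynomial.algHom_ext (by simp [e3])
  have h2 : e3 K (r.comp (X + C h)) = Polynomial.aeval (ι K 2 + algebraMap K (A3 K) h) r := by
    rw [e3, Polynomial.aeval_comp]
    simp [Polynomial.algebraMap_eq]
  have := congrArg (fun F : Polynomial K →ₐ[K] A3 K => F r) h1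
  simpa [h2] using this

lemma p3_subst (g : A3 K) (h : K) {u : A3 K} (hu : u ∈ Ad3 K) :
    p3 K (subst K g h u) = (p3 K u).comp (X + C h) := by
  obtain ⟨q, rfl⟩ := mem_Ad3 hu
  rw [subst_e3, p3_e3, p3_e3]

end Aux

namespace Aux
variable {K : Type} [Field K]

lemma delta_coeff [CharZero K] (p : Polynomial K) (n : ℕ) (hn : 1 ≤ n)
    (hdeg : p.natDegree ≤ n) :
    (p.comp (X + C (1:K)) - p).coeff (n-1) = (n : K) * p.coeff n := by
  have hcomp : p.comp (X + C (1:K)) = Polynomial.taylor 1 p := (Polynomial.taylor_apply 1 p).symm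
  rw [hcomp, Polynomial.coeff_sub, Polynomial.taylor_coeff]
  set q := Polynomial.hasseDeriv (n-1) p with hq
  have hqdeg : q.natDegree < 2 := by
    have h := Polynomial.natDegree_hasseDeriv_le p (n-1)
    rw [← hq] at h
    omega
  have heval : q.eval 1 = q.coeff 0 + q.coeff 1 := by
    rw [Polynomial.eval_eq_sum_range' hqdeg]
    simp [Finset.sum_range_succ]
  have hc0 : q.coeff 0 = p.coeff (n-1) := by
    rw [hq, Polynomial.hasseDeriv_coeff]
    simp
  have hc1 : q.coeff 1 = (n : K) * p.coeff n := by
    rw [hq, Polynomial.hasseDeriv_coeff]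
    have h1 : 1 + (n - 1) = n := by omega
    rw [h1]
    have h2 : n.choose (n-1) = n := by
      have h3 := Nat.choose_symm (Nat.sub_le n 1)
      have h4 : n - (n - 1) = 1 := by omega
      rw [h4, Nat.choose_one_right] at h3
      omega
    rw [h2]
  rw [heval, hc0, hc1]
  ring

lemma delta_degree [CharZero K] (p : Polynomial K) (k : ℕ)
    (h : (p.comp (X + C (1:K)) - p).degree < (k : WithBot ℕ)) :
    p.degree < ((k+1 : ℕ) : WithBot ℕ) := by
  rcases eq_or_ne p 0 with rfl | hp0
  · simpa [Polynomial.degree_zero] using WithBot.bot_lt_coe (k+1 : ℕ)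
  rw [← Polynomial.natDegree_lt_iff_degree_lt hp0]
  by_contra hcon
  push_neg at hcon
  have hn1 : 1 ≤ p.natDegree := by omega
  have hc := delta_coeff p p.natDegree hn1 le_rfl
  have hne : (p.comp (X + C (1:K)) - p).coeff (p.natDegree - 1) ≠ 0 := by
    rw [hc]
    exact mul_ne_zero (Nat.cast_ne_zero.mpr (by omega))
      (Polynomial.leadingCoeff_ne_zero.mpr hp0)
  have hle : ((p.natDegree - 1 : ℕ) : WithBot ℕ) ≤ (p.comp (X + C (1:K)) - p).degree :=
    Polynomial.le_degree_of_ne_zero hne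
  have hlt : ((p.natDegree - 1 : ℕ) : WithBot ℕ) < (k : WithBot ℕ) := lt_of_le_of_lt hle h
  have : p.natDegree - 1 < k := by exact_mod_cast hlt
  omega

end Aux

namespace Aux
variable {K : Type} [Field K]

lemma mem_SS_zero {f : A3 K} : f ∈ SS K 0 ↔ f = 0 := Iff.rfl

lemma mem_SS_succ {m : ℕ} {f : A3 K} :
    f ∈ SS K (m+1) ↔ f ∈ Ad2 K ∧ ∀ g ∈ Ad3 K, ∀ h : K, subst K g h f - f ∈ SS K m :=
  Iff.rfl

lemma SS_neg : ∀ (k : ℕ), ∀ f ∈ SS K k, -f ∈ SS K k := by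
  intro k
  induction k with
  | zero => intro f hf; rw [mem_SS_zero] at hf ⊢; rw [hf, neg_zero]
  | succ m ih =>
      intro f hf
      rw [mem_SS_succ] at hf ⊢
      refine ⟨neg_mem hf.1, fun g hg h => ?_⟩
      have : subst K g h (-f) - (-f) = -(subst K g h f - f) := by
        rw [map_neg]; abel
      rw [this]
      exact ih _ (hf.2 g hg h)

lemma SS_smul (a : K) : ∀ (k : ℕ), ∀ f ∈ SS K k, algebraMap K (A3 K) a * f ∈ SS K k := by
  intro k
  induction k with
  | zero => intro f hf; rw [mem_SS_zero] at hf ⊢; rw [hf, mul_zero]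
  | succ m ih =>
      intro f hf
      rw [mem_SS_succ] at hf ⊢
      refine ⟨mul_mem (Subalgebra.algebraMap_mem _ _) hf.1, fun g hg h => ?_⟩
      have : subst K g h (algebraMap K (A3 K) a * f) - algebraMap K (A3 K) a * f
          = algebraMap K (A3 K) a * (subst K g h f - f) := by
        rw [map_mul, AlgHom.commutes, mul_sub]
      rw [this]
      exact ih _ (hf.2 g hg h)

lemma SS_deg [CharZero K] :
    ∀ (k : ℕ), ∀ u ∈ SS K k, u ∈ Ad3 K → (p3 K u).degree < (k : WithBot ℕ) := by
  intro k
  induction k with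
  | zero =>
      intro u hu _
      rw [mem_SS_zero] at hu
      rw [hu, map_zero, Polynomial.degree_zero]
      exact WithBot.bot_lt_coe 0
  | succ m ih =>
      intro u hu hu3
      rw [mem_SS_succ] at hu
      have hv : subst K 0 1 u - u ∈ SS K m := hu.2 0 (Subalgebra.zero_mem _) 1
      have hv3 : subst K 0 1 u - u ∈ Ad3 K := by
        refine sub_mem (algHom_maps_adjoin3 _ ?_ u hu3) hu3
        rw [subst_x3]
        exact add_mem (Algebra.self_mem_adjoin_singleton K _) (Subalgebra.algebraMap_mem _ _)
      have hd := ih _ hv hv3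
      rw [map_sub, p3_subst 0 1 hu3] at hd
      exact delta_degree _ m hd

lemma x2_coeff_SS [CharZero K] :
    ∀ (k : ℕ) (a b : K),
      algebraMap K (A3 K) a * ι K 1 + algebraMap K (A3 K) b ∈ SS K k → a = 0 := by
  intro k
  induction k with
  | zero =>
      intro a b hab
      rw [mem_SS_zero] at hab
      have := congrArg (FreeAlgebra.lift K ![(0 : Polynomial K), X, 0]) hab
      simp only [map_add, map_mul, map_zero, AlgHom.commutes, FreeAlgebra.lift_ι_apply] at this
      have h1 : (algebraMap K (Polynomial K) a * X + algebraMap K (Polynomial K) b).coeff 1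
          = (0 : Polynomial K).coeff 1 := by
        rw [show (![(0 : Polynomial K), X, 0] : Fin 3 → Polynomial K) 1 = X from rfl] at this
        rw [this]
      simpa [Polynomial.algebraMap_eq, Polynomial.coeff_C] using h1
  | succ m ih =>
      intro a b hab
      by_contra ha
      rw [mem_SS_succ] at hab
      set g : A3 K := e3 K (X ^ (m+1)) with hgdef
      have hg3 : g ∈ Ad3 K := e3_mem _
      have hstep := hab.2 g hg3 0
      have hsub : subst K g 0 (algebraMap K (A3 K) a * ι K 1 + algebraMap K (A3 K) b)
          - (algebraMap K (A3 K) a * ι K 1 + algebraMap K (A3 K) b)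
          = algebraMap K (A3 K) a * g := by
        rw [map_add, map_mul, AlgHom.commutes, AlgHom.commutes, subst_x2]
        noncomm_ring
      rw [hsub] at hstep
      have hgSS : g ∈ SS K m := by
        have := SS_smul a⁻¹ m _ hstep
        rwa [← mul_assoc, ← map_mul, inv_mul_cancel₀ ha, map_one, one_mul] at this
      have hd := SS_deg m g hgSS hg3
      rw [hgdef, p3_e3, Polynomial.degree_X_pow] at hd
      have : m + 1 < m := by exact_mod_cast hd
      omega

lemma const_of_invariant [CharZero K] (f : A3 K) (hf : f ∈ Ad3 K)
    (h : subst K 0 1 f = f) : ∃ c : K, f = algebraMap K (A3 K) c := by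
  have h0 : ((p3 K f).comp (X + C (1:K)) - p3 K f).degree < ((0:ℕ) : WithBot ℕ) := by
    rw [← p3_subst 0 1 hf, h, sub_self, Polynomial.degree_zero]
    exact WithBot.bot_lt_coe 0
  have h1 := delta_degree (p3 K f) 0 h0
  have h2 : (p3 K f).degree ≤ 0 := by
    apply Nat.WithBot.lt_one_iff_le_zero.mp
    exact_mod_cast h1
  refine ⟨(p3 K f).coeff 0, ?_⟩
  have h3 := Polynomial.eq_C_of_degree_le_zero h2
  calc f = e3 K (p3 K f) := (e3_p3 hf).symm
    _ = e3 K (C ((p3 K f).coeff 0)) := by rw [← h3]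
    _ = algebraMap K (A3 K) ((p3 K f).coeff 0) := by rw [e3, Polynomial.aeval_C]

end Aux
namespace Aux
variable {K : Type} [Field K]

def tau (K : Type) [Field K] (q : Polynomial K) (h : K) : A3 K ≃ₐ[K] A3 K :=
  AlgEquiv.ofAlgHom (subst K (e3 K q) h) (subst K (-(e3 K (q.comp (X - C h)))) (-h))
    (FreeAlgebra.hom_ext (funext fun i => by
      fin_cases i
      · simp
      · simp only [AlgHom.coe_comp, Function.comp_apply, AlgHom.id_apply]
        show subst K (e3 K q) h (subst K (-(e3 K (q.comp (X - C h)))) (-h) (ι K 1)) = ι K 1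
        rw [subst_x2, map_add, map_neg, subst_x2, subst_e3]
        have : (q.comp (X - C h)).comp (X + C h) = q := by
          rw [Polynomial.comp_assoc]
          simp
        rw [this]
        abel
      · simp only [AlgHom.coe_comp, Function.comp_apply, AlgHom.id_apply]
        show subst K (e3 K q) h (subst K (-(e3 K (q.comp (X - C h)))) (-h) (ι K 2)) = ι K 2
        rw [subst_x3, map_add, AlgHom.commutes, subst_x3, map_neg]
        abel))
    (FreeAlgebra.hom_ext (funext fun i => by
      fin_cases i
      · simp
      · simp only [AlgHom.coe_comp, Function.comp_apply, AlgHom.id_apply]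
        show subst K (-(e3 K (q.comp (X - C h)))) (-h) (subst K (e3 K q) h (ι K 1)) = ι K 1
        rw [subst_x2, map_add, subst_x2, subst_e3]
        have : q.comp (X + C (-h)) = q.comp (X - C h) := by
          rw [map_neg, sub_eq_add_neg]
        rw [this]
        abel
      · simp only [AlgHom.coe_comp, Function.comp_apply, AlgHom.id_apply]
        show subst K (-(e3 K (q.comp (X - C h)))) (-h) (subst K (e3 K q) h (ι K 2)) = ι K 2
        rw [subst_x3, map_add, AlgHom.commutes, subst_x3, map_neg]
        abel))

@[simp] lemma tau_x1 (q : Polynomial K) (h : K) : tau K q h (ι K 0) = ι K 0 := by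
  show subst K (e3 K q) h (ι K 0) = ι K 0
  simp

@[simp] lemma tau_x2 (q : Polynomial K) (h : K) : tau K q h (ι K 1) = ι K 1 + e3 K q := by
  show subst K (e3 K q) h (ι K 1) = _
  simp

@[simp] lemma tau_x3 (q : Polynomial K) (h : K) :
    tau K q h (ι K 2) = ι K 2 + algebraMap K (A3 K) h := by
  show subst K (e3 K q) h (ι K 2) = _
  simp

lemma tau_mem (q : Polynomial K) (h : K) : tau K q h ∈ U3 K :=
  ⟨0, Subalgebra.zero_mem _, e3 K q, e3_mem q, h, by rw [tau_x1, add_zero], tau_x2 q h,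
    tau_x3 q h⟩

def muHom (K : Type) [Field K] (f : A3 K) : A3 K →ₐ[K] A3 K :=
  FreeAlgebra.lift K ![ι K 0 + f, ι K 1, ι K 2]

@[simp] lemma muHom_x1 (f : A3 K) : muHom K f (ι K 0) = ι K 0 + f := by simp [muHom]
@[simp] lemma muHom_x2 (f : A3 K) : muHom K f (ι K 1) = ι K 1 := by simp [muHom]
@[simp] lemma muHom_x3 (f : A3 K) : muHom K f (ι K 2) = ι K 2 := by simp [muHom]

lemma muHom_fix (f : A3 K) : ∀ u ∈ Ad2 K, muHom K f u = u :=
  eq_on_adjoin2 (muHom K f) (AlgHom.id K _) (by simp) (by simp)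

def mu (K : Type) [Field K] (f : A3 K) (hf : f ∈ Ad2 K) : A3 K ≃ₐ[K] A3 K :=
  AlgEquiv.ofAlgHom (muHom K f) (muHom K (-f))
    (FreeAlgebra.hom_ext (funext fun i => by
      fin_cases i
      · simp only [AlgHom.coe_comp, Function.comp_apply, AlgHom.id_apply]
        show muHom K f (muHom K (-f) (ι K 0)) = ι K 0
        rw [muHom_x1, map_add, muHom_x1, muHom_fix f _ (neg_mem hf)]
        abel
      · simp
      · simp))
    (FreeAlgebra.hom_ext (funext fun i => by
      fin_cases i
      · simp only [AlgHom.coe_comp, Function.comp_apply, AlgHom.id_apply]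
        show muHom K (-f) (muHom K f (ι K 0)) = ι K 0
        rw [muHom_x1, map_add, muHom_x1, muHom_fix (-f) _ hf]
        abel
      · simp
      · simp))

@[simp] lemma mu_x1 (f : A3 K) (hf : f ∈ Ad2 K) : mu K f hf (ι K 0) = ι K 0 + f := by
  show muHom K f (ι K 0) = _; simp

@[simp] lemma mu_x2 (f : A3 K) (hf : f ∈ Ad2 K) : mu K f hf (ι K 1) = ι K 1 := by
  show muHom K f (ι K 1) = _; simp

@[simp] lemma mu_x3 (f : A3 K) (hf : f ∈ Ad2 K) : mu K f hf (ι K 2) = ι K 2 := by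
  show muHom K f (ι K 2) = _; simp

lemma mu_mem (f : A3 K) (hf : f ∈ Ad2 K) : mu K f hf ∈ U3 K :=
  ⟨f, hf, 0, Subalgebra.zero_mem _, 0, mu_x1 f hf, by rw [mu_x2, add_zero],
    by rw [mu_x3, map_zero, add_zero]⟩

end Aux

namespace Aux
variable {K : Type} [Field K]

lemma coe_mul_apply (a b : ↥(U3 K)) (u : A3 K) :
    ((↑(a * b) : A3 K ≃ₐ[K] A3 K)) u
      = (↑a : A3 K ≃ₐ[K] A3 K) ((↑b : A3 K ≃ₐ[K] A3 K) u) := by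
  rw [Subgroup.coe_mul, AlgEquiv.mul_apply]

lemma coe_one_apply (u : A3 K) : ((↑(1 : ↥(U3 K)) : A3 K ≃ₐ[K] A3 K)) u = u := by
  rw [OneMemClass.coe_one]; rfl

lemma inv_apply_apply (a : ↥(U3 K)) (u : A3 K) :
    (↑a⁻¹ : A3 K ≃ₐ[K] A3 K) ((↑a : A3 K ≃ₐ[K] A3 K) u) = u := by
  rw [← coe_mul_apply, inv_mul_cancel, coe_one_apply]

lemma apply_inv_apply (a : ↥(U3 K)) (u : A3 K) :
    (↑a : A3 K ≃ₐ[K] A3 K) ((↑a⁻¹ : A3 K ≃ₐ[K] A3 K) u) = u := by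
  rw [← coe_mul_apply, mul_inv_cancel, coe_one_apply]

lemma comm_rel (φ y : ↥(U3 K)) (u : A3 K) :
    ((↑(φ * y * φ⁻¹ * y⁻¹) : A3 K ≃ₐ[K] A3 K))
        ((↑y : A3 K ≃ₐ[K] A3 K) ((↑φ : A3 K ≃ₐ[K] A3 K) u))
      = (↑φ : A3 K ≃ₐ[K] A3 K) ((↑y : A3 K ≃ₐ[K] A3 K) u) := by
  have hgrp : φ * y * φ⁻¹ * y⁻¹ * y * φ = φ * y := by group
  rw [← coe_mul_apply, ← coe_mul_apply, hgrp, coe_mul_apply]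

/-- The data of a member of U3. -/
lemma U3_data (y : ↥(U3 K)) :
    ∃ g1 ∈ Ad2 K, ∃ g2 ∈ Ad3 K, ∃ g3 : K,
      (↑y : A3 K ≃ₐ[K] A3 K) (ι K 0) = ι K 0 + g1 ∧
      (↑y : A3 K ≃ₐ[K] A3 K) (ι K 1) = ι K 1 + g2 ∧
      (↑y : A3 K ≃ₐ[K] A3 K) (ι K 2) = ι K 2 + algebraMap K (A3 K) g3 := y.2

end Aux

namespace Aux
variable {K : Type} [Field K]

lemma main [CharZero K] : ∀ (m : ℕ) (φ : ↥(U3 K)),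
    φ ∈ upperCentralSeries ↥(U3 K) m ↔
      ∃ f1 ∈ SS K m,
        (↑φ : A3 K ≃ₐ[K] A3 K) (ι K 0) = ι K 0 + f1 ∧
        (↑φ : A3 K ≃ₐ[K] A3 K) (ι K 1) = ι K 1 ∧
        (↑φ : A3 K ≃ₐ[K] A3 K) (ι K 2) = ι K 2 := by
  intro m
  induction m with
  | zero =>
      intro φ
      rw [upperCentralSeries, Subgroup.upperCentralSeries_zero, Subgroup.mem_bot]
      constructor
      · rintro rfl
        exact ⟨0, mem_SS_zero.mpr rfl, by rw [coe_one_apply, add_zero],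
          coe_one_apply _, coe_one_apply _⟩
      · rintro ⟨f1, hf1, h1, h2, h3⟩
        rw [mem_SS_zero] at hf1
        rw [hf1, add_zero] at h1
        apply Subtype.ext
        apply AlgEquiv.ext
        intro u
        have hhom : ((↑φ : A3 K ≃ₐ[K] A3 K) : A3 K →ₐ[K] A3 K) = AlgHom.id K (A3 K) :=
          FreeAlgebra.hom_ext (funext fun i => by
            fin_cases i
            · simpa using h1
            · simpa using h2
            · simpa using h3)
        have := congrArg (fun F : A3 K →ₐ[K] A3 K => F u) hhom
        simpa using this
  | succ m IH =>
      intro φ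
      rw [upperCentralSeries, Subgroup.mem_upperCentralSeries_succ_iff]
      constructor
      · intro hz
        obtain ⟨f1, hf1ad, f2, hf2, f3, hφ1, hφ2, hφ3⟩ := U3_data φ
        have hx2mem : ι K 1 ∈ Ad2 K := Algebra.subset_adjoin (Set.mem_insert _ _)
        have hx3mem : ι K 2 ∈ Ad2 K := Algebra.subset_adjoin (Set.mem_insert_of_mem _ rfl)
        -- general extraction from the commutator being in Z_m
        have extract : ∀ y : ↥(U3 K), ∀ g1 ∈ Ad2 K, ∀ g2 ∈ Ad3 K, ∀ g3 : K,
            (↑y : A3 K ≃ₐ[K] A3 K) (ι K 0) = ι K 0 + g1 →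
            (↑y : A3 K ≃ₐ[K] A3 K) (ι K 1) = ι K 1 + g2 →
            (↑y : A3 K ≃ₐ[K] A3 K) (ι K 2) = ι K 2 + algebraMap K (A3 K) g3 →
            ((ι K 1 + g2) + (↑y : A3 K ≃ₐ[K] A3 K) f2
                = (ι K 1 + f2) + (↑φ : A3 K ≃ₐ[K] A3 K) g2) ∧
            f1 + (↑φ : A3 K ≃ₐ[K] A3 K) g1 - (g1 + (↑y : A3 K ≃ₐ[K] A3 K) f1) ∈ SS K m := by
          intro y g1 hg1 g2 hg2 g3 hy1 hy2 hy3
          obtain ⟨e, he, hs1, hs2, hs3⟩ := (IH _).mp (hz y)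
          have hσfix : ∀ u ∈ Ad2 K,
              (↑(φ * y * φ⁻¹ * y⁻¹) : A3 K ≃ₐ[K] A3 K) u = u :=
            equiv_fix_adjoin2 _ hs2 hs3
          have hYad2 : ∀ u ∈ Ad2 K, (↑y : A3 K ≃ₐ[K] A3 K) u ∈ Ad2 K :=
            adjoin_x2x3_stable _ g2 g3 hg2 hy2 hy3
          have hyf1 : (↑y : A3 K ≃ₐ[K] A3 K) f1 ∈ Ad2 K := hYad2 _ hf1ad
          have hyf2 : (↑y : A3 K ≃ₐ[K] A3 K) f2 ∈ Ad2 K := hYad2 _ (Ad3_le_Ad2 hf2)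
          have c2a : (↑(φ * y * φ⁻¹ * y⁻¹) : A3 K ≃ₐ[K] A3 K)
              ((↑y : A3 K ≃ₐ[K] A3 K) ((↑φ : A3 K ≃ₐ[K] A3 K) (ι K 1)))
              = ι K 1 + g2 + (↑y : A3 K ≃ₐ[K] A3 K) f2 := by
            rw [hφ2, map_add, hy2, map_add, map_add, hσfix _ hx2mem,
              hσfix _ (Ad3_le_Ad2 hg2), hσfix _ hyf2]
          have c2b : (↑φ : A3 K ≃ₐ[K] A3 K) ((↑y : A3 K ≃ₐ[K] A3 K) (ι K 1))
              = ι K 1 + f2 + (↑φ : A3 K ≃ₐ[K] A3 K) g2 := by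
            rw [hy2, map_add, hφ2]
          have c2 := comm_rel φ y (ι K 1)
          rw [c2a, c2b] at c2
          have c1a : (↑(φ * y * φ⁻¹ * y⁻¹) : A3 K ≃ₐ[K] A3 K)
              ((↑y : A3 K ≃ₐ[K] A3 K) ((↑φ : A3 K ≃ₐ[K] A3 K) (ι K 0)))
              = ι K 0 + e + g1 + (↑y : A3 K ≃ₐ[K] A3 K) f1 := by
            rw [hφ1, map_add, hy1, map_add, map_add,
              show (↑(φ * y * φ⁻¹ * y⁻¹) : A3 K ≃ₐ[K] A3 K) (ι K 0) = ι K 0 + e from hs1,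
              hσfix _ hg1, hσfix _ hyf1]
          have c1b : (↑φ : A3 K ≃ₐ[K] A3 K) ((↑y : A3 K ≃ₐ[K] A3 K) (ι K 0))
              = ι K 0 + f1 + (↑φ : A3 K ≃ₐ[K] A3 K) g1 := by
            rw [hy1, map_add, hφ1]
          have c1 := comm_rel φ y (ι K 0)
          rw [c1a, c1b] at c1
          constructor
          · calc (ι K 1 + g2) + (↑y : A3 K ≃ₐ[K] A3 K) f2
                = ι K 1 + g2 + (↑y : A3 K ≃ₐ[K] A3 K) f2 := by abel
              _ = ι K 1 + f2 + (↑φ : A3 K ≃ₐ[K] A3 K) g2 := c2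
              _ = (ι K 1 + f2) + (↑φ : A3 K ≃ₐ[K] A3 K) g2 := by abel
          · have key : f1 + (↑φ : A3 K ≃ₐ[K] A3 K) g1
                - (g1 + (↑y : A3 K ≃ₐ[K] A3 K) f1) = e := by
              have c1' : ι K 0 + (e + (g1 + (↑y : A3 K ≃ₐ[K] A3 K) f1))
                  = ι K 0 + (f1 + (↑φ : A3 K ≃ₐ[K] A3 K) g1) := by
                calc ι K 0 + (e + (g1 + (↑y : A3 K ≃ₐ[K] A3 K) f1))
                    = ι K 0 + e + g1 + (↑y : A3 K ≃ₐ[K] A3 K) f1 := by abel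
                  _ = ι K 0 + f1 + (↑φ : A3 K ≃ₐ[K] A3 K) g1 := c1
                  _ = ι K 0 + (f1 + (↑φ : A3 K ≃ₐ[K] A3 K) g1) := by abel
              have hcan := add_left_cancel c1'
              rw [← hcan]
              abel
            rw [key]
            exact he
        -- (a) kill f3, using y = tau X 0
        have hf3 : algebraMap K (A3 K) f3 = 0 := by
          have E := (extract ⟨tau K X 0, tau_mem X 0⟩ 0 (Subalgebra.zero_mem _)
            (e3 K X) (e3_mem X) 0
            (by show tau K (X : Polynomial K) 0 (ι K 0) = ι K 0 + 0
                rw [tau_x1, add_zero])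
            (by show tau K (X : Polynomial K) 0 (ι K 1) = ι K 1 + e3 K X
                rw [tau_x2])
            (by show tau K (X : Polynomial K) 0 (ι K 2) = ι K 2 + algebraMap K (A3 K) 0
                rw [tau_x3])).1
          have hYfix : (tau K (X : Polynomial K) 0) f2 = f2 :=
            equiv_fix_adjoin3 _ (by rw [tau_x3, map_zero, add_zero]) f2 hf2
          have E' : (ι K 1 + e3 K X) + f2
              = (ι K 1 + f2) + ((↑φ : A3 K ≃ₐ[K] A3 K) (ι K 2)
                  ) := by
            have hex : e3 K (X : Polynomial K) = ι K 2 := e3_X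
            calc (ι K 1 + e3 K X) + f2
                = (ι K 1 + e3 K X) + (tau K (X : Polynomial K) 0) f2 := by rw [hYfix]
              _ = (ι K 1 + f2) + (↑φ : A3 K ≃ₐ[K] A3 K) (e3 K X) := E
              _ = (ι K 1 + f2) + (↑φ : A3 K ≃ₐ[K] A3 K) (ι K 2) := by rw [hex]
          rw [hφ3, e3_X] at E'
          have habel : algebraMap K (A3 K) f3
              = ((ι K 1 + f2) + (ι K 2 + algebraMap K (A3 K) f3))
                - ((ι K 1 + ι K 2) + f2) := by abel
          rw [habel, ← E', sub_self]
        have hφ3' : (↑φ : A3 K ≃ₐ[K] A3 K) (ι K 2) = ι K 2 := by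
          rw [hφ3, hf3, add_zero]
        -- (b) f2 is a constant, using y = tau 0 1
        obtain ⟨c, hc⟩ : ∃ c : K, f2 = algebraMap K (A3 K) c := by
          have E := (extract ⟨tau K 0 1, tau_mem 0 1⟩ 0 (Subalgebra.zero_mem _)
            0 (Subalgebra.zero_mem _) 1
            (by show tau K (0 : Polynomial K) 1 (ι K 0) = ι K 0 + 0
                rw [tau_x1, add_zero])
            (by show tau K (0 : Polynomial K) 1 (ι K 1) = ι K 1 + 0
                rw [tau_x2, map_zero])
            (by show tau K (0 : Polynomial K) 1 (ι K 2) = ι K 2 + algebraMap K (A3 K) 1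
                rw [tau_x3])).1
          have hYsub : (tau K (0 : Polynomial K) 1) f2 = subst K 0 1 f2 :=
            equiv_eq_subst _ 0 1 (by rw [tau_x2, map_zero]) (by rw [tau_x3]) f2
              (Ad3_le_Ad2 hf2)
          rw [hYsub, map_zero, add_zero, add_zero] at E
          -- E : ι K 1 + subst K 0 1 f2 = ι K 1 + f2
          have hinv : subst K 0 1 f2 = f2 := add_left_cancel E
          exact const_of_invariant f2 hf2 hinv
        -- (c) the constant is zero, using y = mu (x2 * x2)
        have hg1sq : ι K 1 * ι K 1 ∈ Ad2 K := mul_mem hx2mem hx2mem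
        have hc0 : c = 0 := by
          have E := (extract ⟨mu K (ι K 1 * ι K 1) hg1sq, mu_mem _ hg1sq⟩
            (ι K 1 * ι K 1) hg1sq 0 (Subalgebra.zero_mem _) 0
            (by show mu K (ι K 1 * ι K 1) hg1sq (ι K 0) = ι K 0 + ι K 1 * ι K 1
                rw [mu_x1])
            (by show mu K (ι K 1 * ι K 1) hg1sq (ι K 1) = ι K 1 + 0
                rw [mu_x2, add_zero])
            (by show mu K (ι K 1 * ι K 1) hg1sq (ι K 2) = ι K 2 + algebraMap K (A3 K) 0
                rw [mu_x3, map_zero, add_zero])).2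
          have hYfix : (mu K (ι K 1 * ι K 1) hg1sq) f1 = f1 :=
            equiv_fix_adjoin2 _ (mu_x2 _ _) (mu_x3 _ _) f1 hf1ad
          rw [hYfix] at E
          have hφ2c : (↑φ : A3 K ≃ₐ[K] A3 K) (ι K 1) = ι K 1 + algebraMap K (A3 K) c := by
            rw [hφ2, hc]
          have expand : (ι K 1 + algebraMap K (A3 K) c) * (ι K 1 + algebraMap K (A3 K) c)
              = ι K 1 * ι K 1 + (algebraMap K (A3 K) c * ι K 1
                  + algebraMap K (A3 K) c * ι K 1)
                + algebraMap K (A3 K) c * algebraMap K (A3 K) c := by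
            rw [add_mul, mul_add, mul_add, ← Algebra.commutes c (ι K 1)]
            abel
          have hform : f1 + (↑φ : A3 K ≃ₐ[K] A3 K) (ι K 1 * ι K 1)
              - (ι K 1 * ι K 1 + f1)
              = algebraMap K (A3 K) (2 * c) * ι K 1 + algebraMap K (A3 K) (c * c) := by
            rw [map_mul, hφ2c, expand, two_mul, map_add, map_mul]
            rw [add_mul]
            abel
          rw [hform] at E
          have h2c := x2_coeff_SS m (2 * c) (c * c) E
          rcases mul_eq_zero.mp h2c with h2 | h2
          · exact absurd h2 two_ne_zero
          · exact h2
        have hφ2' : (↑φ : A3 K ≃ₐ[K] A3 K) (ι K 1) = ι K 1 := by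
          rw [hφ2, hc, hc0, map_zero, add_zero]
        -- (d) f1 ∈ SS K (m+1), using y = tau p h
        refine ⟨f1, ?_, hφ1, hφ2', hφ3'⟩
        rw [mem_SS_succ]
        refine ⟨hf1ad, fun g hg h => ?_⟩
        obtain ⟨p, rfl⟩ := mem_Ad3 hg
        have E := (extract ⟨tau K p h, tau_mem p h⟩ 0 (Subalgebra.zero_mem _)
          (e3 K p) (e3_mem p) h
          (by show tau K p h (ι K 0) = ι K 0 + 0
              rw [tau_x1, add_zero])
          (by show tau K p h (ι K 1) = ι K 1 + e3 K p
              rw [tau_x2])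
          (by show tau K p h (ι K 2) = ι K 2 + algebraMap K (A3 K) h
              rw [tau_x3])).2
        have hYsub : (tau K p h) f1 = subst K (e3 K p) h f1 :=
          equiv_eq_subst _ (e3 K p) h (tau_x2 p h) (tau_x3 p h) f1 hf1ad
        rw [hYsub, map_zero, add_zero, zero_add] at E
        -- E : f1 - subst K (e3 K p) h f1 ∈ SS K m
        have := SS_neg m _ E
        rwa [neg_sub] at this
      · rintro ⟨f1, hf1S, hφ1, hφ2, hφ3⟩
        rw [mem_SS_succ] at hf1S
        obtain ⟨hf1ad, hf1cond⟩ := hf1S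
        intro y
        apply (IH _).mpr
        obtain ⟨g1, hg1, g2, hg2, g3, hy1, hy2, hy3⟩ := U3_data y
        obtain ⟨k1, hk1, k2, hk2, k3, hi1, hi2, hi3⟩ := U3_data y⁻¹
        have hx2mem : ι K 1 ∈ Ad2 K := Algebra.subset_adjoin (Set.mem_insert _ _)
        have hx3mem : ι K 2 ∈ Ad2 K := Algebra.subset_adjoin (Set.mem_insert_of_mem _ rfl)
        have hΦfix : ∀ u ∈ Ad2 K, (↑φ : A3 K ≃ₐ[K] A3 K) u = u :=
          equiv_fix_adjoin2 _ hφ2 hφ3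
        have hΦi2 : (↑φ⁻¹ : A3 K ≃ₐ[K] A3 K) (ι K 1) = ι K 1 := by
          nth_rewrite 1 [← hφ2]
          exact inv_apply_apply φ (ι K 1)
        have hΦi3 : (↑φ⁻¹ : A3 K ≃ₐ[K] A3 K) (ι K 2) = ι K 2 := by
          nth_rewrite 1 [← hφ3]
          exact inv_apply_apply φ (ι K 2)
        have hΦifix : ∀ u ∈ Ad2 K, (↑φ⁻¹ : A3 K ≃ₐ[K] A3 K) u = u :=
          equiv_fix_adjoin2 _ hΦi2 hΦi3
        have hΦi1 : (↑φ⁻¹ : A3 K ≃ₐ[K] A3 K) (ι K 0) = ι K 0 - f1 := by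
          have hstep : (↑φ : A3 K ≃ₐ[K] A3 K) (ι K 0 - f1) = ι K 0 := by
            rw [map_sub, hφ1, hΦfix _ hf1ad, add_sub_cancel_right]
          nth_rewrite 1 [← hstep]
          rw [inv_apply_apply]
        have σapp : ∀ u : A3 K, (↑(φ * y * φ⁻¹ * y⁻¹) : A3 K ≃ₐ[K] A3 K) u
            = (↑φ : A3 K ≃ₐ[K] A3 K) ((↑y : A3 K ≃ₐ[K] A3 K)
              ((↑φ⁻¹ : A3 K ≃ₐ[K] A3 K) ((↑y⁻¹ : A3 K ≃ₐ[K] A3 K) u))) := by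
          intro u
          rw [coe_mul_apply, coe_mul_apply, coe_mul_apply]
        have hYad2 : ∀ u ∈ Ad2 K, (↑y : A3 K ≃ₐ[K] A3 K) u ∈ Ad2 K :=
          adjoin_x2x3_stable _ g2 g3 hg2 hy2 hy3
        have s2 : (↑(φ * y * φ⁻¹ * y⁻¹) : A3 K ≃ₐ[K] A3 K) (ι K 1) = ι K 1 := by
          rw [σapp, hi2, hΦifix _ (add_mem hx2mem (Ad3_le_Ad2 hk2)), ← hi2,
            apply_inv_apply, hφ2]
        have s3 : (↑(φ * y * φ⁻¹ * y⁻¹) : A3 K ≃ₐ[K] A3 K) (ι K 2) = ι K 2 := by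
          rw [σapp, hi3, hΦifix _ (add_mem hx3mem (Subalgebra.algebraMap_mem _ _)), ← hi3,
            apply_inv_apply, hφ3]
        have s1 : (↑(φ * y * φ⁻¹ * y⁻¹) : A3 K ≃ₐ[K] A3 K) (ι K 0)
            = ι K 0 + (f1 - (↑y : A3 K ≃ₐ[K] A3 K) f1) := by
          rw [σapp, hi1, map_add, hΦi1, hΦifix _ hk1]
          have hre : ι K 0 - f1 + k1 = (ι K 0 + k1) - f1 := by abel
          rw [hre, map_sub, ← hi1, apply_inv_apply, map_sub, hφ1,
            hΦfix _ (hYad2 _ hf1ad)]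
          abel
        have hYsub : (↑y : A3 K ≃ₐ[K] A3 K) f1 = subst K g2 g3 f1 :=
          equiv_eq_subst _ g2 g3 hy2 hy3 f1 hf1ad
        have hmem : f1 - (↑y : A3 K ≃ₐ[K] A3 K) f1 ∈ SS K m := by
          rw [hYsub]
          have := SS_neg m _ (hf1cond g2 hg2 g3)
          rwa [neg_sub] at this
        exact ⟨f1 - (↑y : A3 K ≃ₐ[K] A3 K) f1, hmem, s1, s2, s3⟩

end Aux

theorem upperCentralSeries_U3 (K : Type) [Field K] [CharZero K] (m : ℕ) (hm : 1 ≤ m)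
    (φ : U3 K) :
    φ ∈ upperCentralSeries ↥(U3 K) m ↔
      ∃ f1 ∈ SS K m,
        (φ : A3 K ≃ₐ[K] A3 K) (ι K 0) = ι K 0 + f1 ∧
        (φ : A3 K ≃ₐ[K] A3 K) (ι K 1) = ι K 1 ∧
        (φ : A3 K ≃ₐ[K] A3 K) (ι K 2) = ι K 2 := by
  exact Aux.main m φ
end
end

section
/- Let n ≥ 4. An automorphism φ lies in the center Z(U_n) of the group U_n of unitriangular automorphisms of A_n = K⟨x_1,…,x_n⟩ if and only if φ has the form (x_1 + f(x_2,…,x_n), x_2, …, x_n), fixing x_2,…,x_n and sending x_1 ↦ x_1 + f, where f ∈ K⟨x_2,…,x_n⟩ satisfies f(x_2 + g_2, …, x_n + g_n) = f(x_2,…,x_n) for all g_2 ∈ K⟨x_3,…,x_n⟩, g_3 ∈ K⟨x_4,…,x_n⟩, …, g_{n-1} ∈ K⟨x_n⟩, g_n ∈ K (i.e. f is fixed by every unitriangular substitution in the variables x_2,…,x_n). -/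
/- STATEMENT 17: for n ≥ 4 (here n = m + 4), an automorphism φ of Aₙ = K⟨x₁,…,xₙ⟩
   (xᵢ = ι K (i-1)) lies in the center of the group Uₙ of unitriangular automorphisms
   iff φ fixes x₂,…,xₙ and sends x₁ ↦ x₁ + f where f ∈ K⟨x₂,…,xₙ⟩ is fixed by every
   unitriangular substitution in the variables x₂,…,xₙ (i.e. by every ψ ∈ Uₙ fixing x₁). -/

noncomputable section
open FreeAlgebra

/-- φ is a unitriangular automorphism of K⟨x₁,…,xₙ⟩:
xᵢ ↦ xᵢ + fᵢ(x_{i+1},…,xₙ) with fᵢ ∈ K⟨x_{i+1},…,xₙ⟩ (and fₙ ∈ K·1). -/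
def IsUn (K : Type) [Field K] (n : ℕ)
    (φ : FreeAlgebra K (Fin n) ≃ₐ[K] FreeAlgebra K (Fin n)) : Prop :=
  ∃ F : Fin n → FreeAlgebra K (Fin n),
    (∀ i, F i ∈ Algebra.adjoin K (FreeAlgebra.ι K '' {j | i < j})) ∧
    ∀ i, φ (ι K i) = ι K i + F i

/-- Two algebra maps out of a free algebra agree on the subalgebra generated by a set of
generators on which they agree. -/
lemma eqOn_adjoin_of_eqOn {K : Type} [Field K] {n : ℕ}
    (f g : FreeAlgebra K (Fin n) →ₐ[K] FreeAlgebra K (Fin n)) {s : Set (Fin n)}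
    (h : ∀ k ∈ s, f (ι K k) = g (ι K k)) {x : FreeAlgebra K (Fin n)}
    (hx : x ∈ Algebra.adjoin K (ι K '' s)) : f x = g x := by
  have hle : Algebra.adjoin K (ι K '' s) ≤ AlgHom.equalizer f g := by
    apply Algebra.adjoin_le
    rintro a ⟨k, hk, rfl⟩
    exact h k hk
  exact hle hx

theorem center_Un (K : Type) [Field K] [CharZero K] (m : ℕ)
    (φ : FreeAlgebra K (Fin (m + 4)) ≃ₐ[K] FreeAlgebra K (Fin (m + 4))) :
    (IsUn K (m + 4) φ ∧
      ∀ ψ : FreeAlgebra K (Fin (m + 4)) ≃ₐ[K] FreeAlgebra K (Fin (m + 4)),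
        IsUn K (m + 4) ψ → φ * ψ = ψ * φ) ↔
    ∃ f ∈ Algebra.adjoin K (FreeAlgebra.ι K '' {j : Fin (m + 4) | 0 < j}),
      φ (ι K 0) = ι K 0 + f ∧
      (∀ i : Fin (m + 4), i ≠ 0 → φ (ι K i) = ι K i) ∧
      ∀ ψ : FreeAlgebra K (Fin (m + 4)) ≃ₐ[K] FreeAlgebra K (Fin (m + 4)),
        IsUn K (m + 4) ψ → ψ (ι K 0) = ι K 0 → ψ f = f := by
  constructor
  · rintro ⟨⟨F, hFmem, hFval⟩, hcomm⟩
    have hF0mem : F 0 ∈ Algebra.adjoin K (ι K '' {j : Fin (m + 4) | 0 < j}) := hFmem 0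
    refine ⟨F 0, hF0mem, hFval 0, ?_, ?_⟩
    · -- φ fixes x_i for i ≠ 0
      intro i hi
      -- the elementary automorphism ψ : x₀ ↦ x₀ + x_i, x_j ↦ x_j (j ≠ 0)
      set σ : FreeAlgebra K (Fin (m + 4)) →ₐ[K] FreeAlgebra K (Fin (m + 4)) :=
        FreeAlgebra.lift K (fun j : Fin (m + 4) => if j = 0 then ι K 0 + ι K i else ι K j) with hσ
      set τ : FreeAlgebra K (Fin (m + 4)) →ₐ[K] FreeAlgebra K (Fin (m + 4)) :=
        FreeAlgebra.lift K (fun j : Fin (m + 4) => if j = 0 then ι K 0 - ι K i else ι K j) with hτ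
      have hσne : ∀ j : Fin (m + 4), j ≠ 0 → σ (ι K j) = ι K j := by
        intro j hj; simp [hσ, hj]
      have hτne : ∀ j : Fin (m + 4), j ≠ 0 → τ (ι K j) = ι K j := by
        intro j hj; simp [hτ, hj]
      have hστ : σ.comp τ = AlgHom.id K _ := by
        apply FreeAlgebra.hom_ext
        funext j
        by_cases hj : j = 0
        · subst hj
          simp [hσ, hτ, hσne i hi, hi]
        · simp [hσ, hτ, hj]
      have hτσ : τ.comp σ = AlgHom.id K _ := by
        apply FreeAlgebra.hom_ext
        funext j
        by_cases hj : j = 0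
        · subst hj
          simp [hσ, hτ, hτne i hi, hi]
        · simp [hσ, hτ, hj]
      set ψ : FreeAlgebra K (Fin (m + 4)) ≃ₐ[K] FreeAlgebra K (Fin (m + 4)) :=
        AlgEquiv.ofAlgHom σ τ hστ hτσ with hψ
      have hψapp : ∀ x, ψ x = σ x := fun x => rfl
      have hψUn : IsUn K (m + 4) ψ := by
        refine ⟨fun j => if j = 0 then ι K i else 0, ?_, ?_⟩
        · intro j
          by_cases hj : j = 0
          · subst hj
            simp only [if_pos rfl]
            exact Algebra.subset_adjoin ⟨i, Fin.pos_iff_ne_zero.mpr hi, rfl⟩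
          · simp only [if_neg hj]
            exact Subalgebra.zero_mem _
        · intro j
          by_cases hj : j = 0
          · subst hj; simp [hψapp, hσ]
          · simp [hψapp, hσne j hj, hj]
      have hc := hcomm ψ hψUn
      have hc0 : φ (ψ (ι K 0)) = ψ (φ (ι K 0)) := by
        have := congrArg
          (fun e : FreeAlgebra K (Fin (m + 4)) ≃ₐ[K] FreeAlgebra K (Fin (m + 4)) => e (ι K 0)) hc
        simpa [AlgEquiv.mul_apply] using this
      have hψι0 : ψ (ι K 0) = ι K 0 + ι K i := by simp [hψapp, hσ]
      have hψF0 : ψ (F 0) = F 0 := by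
        have := eqOn_adjoin_of_eqOn σ (AlgHom.id K _)
          (fun k hk => hσne k (Fin.pos_iff_ne_zero.mp hk)) hF0mem
        simpa [hψapp] using this
      rw [hψι0, map_add, hFval 0, hFval i, map_add, hψF0, hψι0] at hc0
      -- hc0 : ι 0 + F 0 + (ι i + F i) = ι 0 + ι i + F 0
      have h3 : ι K 0 + ι K i + F 0 + F i = ι K 0 + ι K i + F 0 := by
        calc ι K 0 + ι K i + F 0 + F i = ι K 0 + F 0 + (ι K i + F i) := by abel
        _ = ι K 0 + ι K i + F 0 := hc0
      have : F i = 0 := by rwa [add_eq_left] at h3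
      rw [hFval i, this, add_zero]
    · -- invariance of f under ψ fixing x₀
      intro ψ hψUn hψ0
      have hc := hcomm ψ hψUn
      have hc0 : φ (ψ (ι K 0)) = ψ (φ (ι K 0)) := by
        have := congrArg
          (fun e : FreeAlgebra K (Fin (m + 4)) ≃ₐ[K] FreeAlgebra K (Fin (m + 4)) => e (ι K 0)) hc
        simpa [AlgEquiv.mul_apply] using this
      rw [hψ0, hFval 0, map_add, hψ0] at hc0
      exact (add_left_cancel hc0).symm
  · rintro ⟨f, hfmem, hφ0, hφne, hfix⟩
    have hφUn : IsUn K (m + 4) φ := by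
      refine ⟨fun j => if j = 0 then f else 0, ?_, ?_⟩
      · intro j
        by_cases hj : j = 0
        · subst hj; simpa using hfmem
        · simp only [if_neg hj]; exact Subalgebra.zero_mem _
      · intro j
        by_cases hj : j = 0
        · subst hj; simpa using hφ0
        · simp [hφne j hj, hj]
    refine ⟨hφUn, ?_⟩
    rintro ψ ⟨G, hGmem, hGval⟩
    -- φ fixes everything in B := adjoin K (ι '' {j | 0 < j})
    have hφfix : ∀ x ∈ Algebra.adjoin K (ι K '' {j : Fin (m + 4) | 0 < j}), φ x = x := by
      intro x hx
      have := eqOn_adjoin_of_eqOn (φ : FreeAlgebra K (Fin (m + 4)) →ₐ[K] _) (AlgHom.id K _)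
        (fun k hk => hφne k (Fin.pos_iff_ne_zero.mp hk)) hx
      simpa using this
    have hGmem' : ∀ j : Fin (m + 4), G j ∈ Algebra.adjoin K (ι K '' {j : Fin (m + 4) | 0 < j}) := by
      intro j
      refine Algebra.adjoin_mono ?_ (hGmem j)
      rintro a ⟨k, hk, rfl⟩
      exact ⟨k, lt_of_le_of_lt (Fin.zero_le j) hk, rfl⟩
    -- ψ.symm maps generators x_j (j ≠ 0) into B
    have hsymm : ∀ j : Fin (m + 4), j ≠ 0 →
        ψ.symm (ι K j) ∈ Algebra.adjoin K (ι K '' {j : Fin (m + 4) | 0 < j}) := by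
      have key : ∀ d : ℕ, ∀ j : Fin (m + 4), j ≠ 0 → m + 4 ≤ (j : ℕ) + 1 + d →
          ι K j ∈ (Algebra.adjoin K (ι K '' {j : Fin (m + 4) | 0 < j})).map ψ.toAlgHom := by
        intro d
        induction d using Nat.strong_induction_on with
        | _ d ih =>
          intro j hj hjd
          have hGj : G j ∈ (Algebra.adjoin K (ι K '' {j : Fin (m + 4) | 0 < j})).map ψ.toAlgHom := by
            have hle : Algebra.adjoin K (ι K '' {k : Fin (m + 4) | j < k}) ≤
                (Algebra.adjoin K (ι K '' {j : Fin (m + 4) | 0 < j})).map ψ.toAlgHom := by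
              apply Algebra.adjoin_le
              rintro a ⟨k, hk, rfl⟩
              have hk' : (j : ℕ) < (k : ℕ) := hk
              have hkn : (k : ℕ) < m + 4 := k.isLt
              refine ih (m + 4 - 1 - (k : ℕ)) (by omega) k ?_ (by omega)
              intro h0
              rw [h0] at hk
              exact absurd (lt_trans (Fin.pos_iff_ne_zero.mpr hj) hk) (lt_irrefl _)
            exact hle (hGmem j)
          obtain ⟨b, hb, hbe⟩ := hGj
          have hbe' : ψ b = G j := hbe
          refine ⟨ι K j - b, ?_, ?_⟩
          · exact Subalgebra.sub_mem _
              (Algebra.subset_adjoin ⟨j, Fin.pos_iff_ne_zero.mpr hj, rfl⟩) hb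
          · show ψ (ι K j - b) = ι K j
            rw [map_sub, hGval j, hbe']
            abel
      intro j hj
      have hjd : m + 4 ≤ (j : ℕ) + 1 + (m + 4 - 1 - (j : ℕ)) := by
        have := j.isLt; omega
      obtain ⟨b, hb, hbe⟩ := key (m + 4 - 1 - (j : ℕ)) j hj hjd
      have hbe' : ψ b = ι K j := hbe
      have : ψ.symm (ι K j) = b := by
        apply ψ.injective
        rw [ψ.apply_symm_apply]
        exact hbe'.symm
      rwa [this]
    -- ψ f = f : build ψ' agreeing with ψ on B but fixing x₀
    have hψf : ψ f = f := by
      set σ : FreeAlgebra K (Fin (m + 4)) →ₐ[K] FreeAlgebra K (Fin (m + 4)) :=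
        FreeAlgebra.lift K (fun j : Fin (m + 4) => if j = 0 then ι K 0 else ψ (ι K j)) with hσ
      set τ : FreeAlgebra K (Fin (m + 4)) →ₐ[K] FreeAlgebra K (Fin (m + 4)) :=
        FreeAlgebra.lift K (fun j : Fin (m + 4) => if j = 0 then ι K 0 else ψ.symm (ι K j)) with hτ
      have hσne : ∀ j : Fin (m + 4), j ≠ 0 → σ (ι K j) = ψ (ι K j) := by
        intro j hj; simp [hσ, hj]
      have hτne : ∀ j : Fin (m + 4), j ≠ 0 → τ (ι K j) = ψ.symm (ι K j) := by
        intro j hj; simp [hτ, hj]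
      -- σ agrees with ψ on B, τ agrees with ψ.symm on B
      have hσB : ∀ x ∈ Algebra.adjoin K (ι K '' {j : Fin (m + 4) | 0 < j}), σ x = ψ x := by
        intro x hx
        exact eqOn_adjoin_of_eqOn σ (ψ : FreeAlgebra K (Fin (m + 4)) →ₐ[K] _)
          (fun k hk => hσne k (Fin.pos_iff_ne_zero.mp hk)) hx
      have hτB : ∀ x ∈ Algebra.adjoin K (ι K '' {j : Fin (m + 4) | 0 < j}), τ x = ψ.symm x := by
        intro x hx
        exact eqOn_adjoin_of_eqOn τ (ψ.symm : FreeAlgebra K (Fin (m + 4)) →ₐ[K] _)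
          (fun k hk => hτne k (Fin.pos_iff_ne_zero.mp hk)) hx
      have hστ : σ.comp τ = AlgHom.id K _ := by
        apply FreeAlgebra.hom_ext
        funext j
        by_cases hj : j = 0
        · subst hj; simp [hσ, hτ]
        · have h1 : τ (ι K j) = ψ.symm (ι K j) := hτne j hj
          have h2 : σ (ψ.symm (ι K j)) = ψ (ψ.symm (ι K j)) := hσB _ (hsymm j hj)
          simp only [AlgHom.coe_comp, Function.comp_apply, AlgHom.coe_id, id_eq]
          rw [h1, h2, ψ.apply_symm_apply]
      have hτσ : τ.comp σ = AlgHom.id K _ := by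
        apply FreeAlgebra.hom_ext
        funext j
        by_cases hj : j = 0
        · subst hj; simp [hσ, hτ]
        · have h1 : σ (ι K j) = ψ (ι K j) := hσne j hj
          have h2 : τ (ψ (ι K j)) = ψ.symm (ψ (ι K j)) := by
            apply hτB
            rw [hGval j]
            exact Subalgebra.add_mem _
              (Algebra.subset_adjoin ⟨j, Fin.pos_iff_ne_zero.mpr hj, rfl⟩) (hGmem' j)
          simp only [AlgHom.coe_comp, Function.comp_apply, AlgHom.coe_id, id_eq]
          rw [h1, h2, ψ.symm_apply_apply]
      set ψ' : FreeAlgebra K (Fin (m + 4)) ≃ₐ[K] FreeAlgebra K (Fin (m + 4)) :=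
        AlgEquiv.ofAlgHom σ τ hστ hτσ with hψ'
      have hψ'app : ∀ x, ψ' x = σ x := fun x => rfl
      have hψ'Un : IsUn K (m + 4) ψ' := by
        refine ⟨fun j => if j = 0 then 0 else G j, ?_, ?_⟩
        · intro j
          by_cases hj : j = 0
          · simp only [if_pos hj]; exact Subalgebra.zero_mem _
          · simp only [if_neg hj]; exact hGmem j
        · intro j
          by_cases hj : j = 0
          · subst hj; simp [hψ'app, hσ]
          · simp only [if_neg hj]
            rw [hψ'app, hσne j hj, hGval j]
      have hψ'0 : ψ' (ι K 0) = ι K 0 := by simp [hψ'app, hσ]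
      have hfixed := hfix ψ' hψ'Un hψ'0
      rw [hψ'app, hσB f hfmem] at hfixed
      exact hfixed
    -- now prove commutation on generators
    have hkey : ∀ j : Fin (m + 4), φ (ψ (ι K j)) = ψ (φ (ι K j)) := by
      intro j
      by_cases hj : j = 0
      · subst hj
        rw [hGval 0, hφ0, map_add, map_add, hφ0, hφfix _ (hGmem' 0), hψf, hGval 0]
        abel
      · rw [hGval j, hφne j hj, map_add, hφne j hj, hφfix _ (hGmem' j), hGval j]
    have hhom : (φ * ψ).toAlgHom = (ψ * φ).toAlgHom := by
      apply FreeAlgebra.hom_ext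
      funext j
      simpa [AlgEquiv.mul_apply] using hkey j
    ext x
    have := AlgHom.congr_fun hhom x
    simpa [AlgEquiv.mul_apply] using this
end
end
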